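/- Let A be a 2×2 real matrix and P = {(x, Ax) : x ∈ ℝ²}. Define ω_j((x₁,y₁),(x₂,y₂)) = ⟨x₁,J₀y₂⟩ + ⟨y₁,J₀x₂⟩ (using the complex structure J((x,y)) = (J₀y, J₀x)). Then P is ω_j-lagrangian if and only if tr(A) = 0. -/
import Mathlib


open Matrix

theorem omega_j_lagrangian_iff_trace_zero (A : Matrix (Fin 2) (Fin 2) ℝ) :
    (∀ x₁ x₂ : Fin 2 → ℝ,
      x₁ ⬝ᵥ (!![0,-1;1,0] : Matrix (Fin 2) (Fin 2) ℝ).mulVec (A.mulVec x₂) +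
        A.mulVec x₁ ⬝ᵥ (!![0,-1;1,0] : Matrix (Fin 2) (Fin 2) ℝ).mulVec x₂ = 0)
      ↔ A.trace = 0 := by
  constructor
  · intro h
    have := h ![1,0] ![0,1]
    simp [Matrix.mulVec, dotProduct, Fin.sum_univ_two, Matrix.trace, Matrix.diag,
      Fin.sum_univ_succ] at this ⊢
    linarith
  · intro h x₁ x₂
    simp [Matrix.trace, Matrix.diag, Fin.sum_univ_two] at h
    simp [Matrix.mulVec, dotProduct, Fin.sum_univ_two]
    linear_combination (x₁ 1 * x₂ 0 - x₁ 0 * x₂ 1) * h
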